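/- Let n ≥ 3 and k ≥ 2 be integers, and let A = pdiag(a_1,…,a_n) be a pseudo-diagonal matrix with 0 ≤ a_1 ≤ … ≤ a_n. If there exists an index i with 2 ≤ i ≤ n−1 such that (k−1)·a_i > max((k−2)·a_n, k·a_1), then the matrix D = A^k (k-th max-plus power) does not satisfy the root condition; specifically, D_{11} + D_{in} < D_{i1} + D_{1n}. -/

import Mathlib

open Finset

/-- Max-plus matrix product: `(A ⊗ B) i j = max_k (A i k + B k j)`. -/
noncomputable def mpMul {n : ℕ} [NeZero n] (A B : Fin n → Fin n → ℝ) :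
    Fin n → Fin n → ℝ :=
  fun i j => univ.sup' univ_nonempty fun k => A i k + B k j

/-- `mpPow A k` is the `k`-th max-plus power of `A` (for `k ≥ 1`). -/
noncomputable def mpPow {n : ℕ} [NeZero n] (A : Fin n → Fin n → ℝ) (k : ℕ) :
    Fin n → Fin n → ℝ :=
  (mpMul A)^[k - 1] A

/-- Let `n ≥ 3`, `k ≥ 2`, `A = pdiag(a₁, …, aₙ)` with `0 ≤ a₁ ≤ … ≤ aₙ`.
If there is an index `i` (0-based: `1 ≤ i ≤ n - 2`) with
`(k-1)·aᵢ > max ((k-2)·aₙ) (k·a₁)`, then `D = A^k` does not satisfy the root condition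
`D i j + D t t ≥ D i t + D t j`; specifically `D₁₁ + D_{i n} < D_{i 1} + D_{1 n}`. -/
theorem mpPow_not_root_condition {n : ℕ} [NeZero n] (hn : 3 ≤ n)
    (k : ℕ) (hk : 2 ≤ k)
    (a : Fin n → ℝ) (hmono : Monotone a) (hpos : ∀ i, 0 ≤ a i)
    (A : Fin n → Fin n → ℝ)
    (hA : ∀ i j, A i j = if i = j then a i else 0)
    (i : Fin n) (hi1 : 1 ≤ (i : ℕ)) (hi2 : (i : ℕ) ≤ n - 2)
    (hbig : max (((k : ℝ) - 2) * a ⟨n - 1, by omega⟩) ((k : ℝ) * a ⟨0, by omega⟩)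
        < ((k : ℝ) - 1) * a i) :
    (¬ ∀ i' j' t' : Fin n,
        mpPow A k i' t' + mpPow A k t' j' ≤ mpPow A k i' j' + mpPow A k t' t') ∧
    mpPow A k ⟨0, by omega⟩ ⟨0, by omega⟩ + mpPow A k i ⟨n - 1, by omega⟩
      < mpPow A k i ⟨0, by omega⟩ + mpPow A k ⟨0, by omega⟩ ⟨n - 1, by omega⟩ := by
  have hn0 : 0 < n := by omega
  set i0 : Fin n := ⟨0, by omega⟩ with hi0def
  set iN : Fin n := ⟨n - 1, by omega⟩ with hiNdef
  have haM : ∀ t : Fin n, a t ≤ a iN := by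
    intro t
    exact hmono (by rw [Fin.le_def]; simp [iN]; omega)
  -- closed form for mpPow A (m+1)
  have key : ∀ m : ℕ, ∀ p q : Fin n,
      mpPow A (m + 1) p q =
        if p = q then max (((m : ℝ) + 1) * a p) (((m : ℝ) - 1) * a iN)
        else max ((m : ℝ) * max (a p) (a q)) (((m : ℝ) - 1) * a iN) := by
    intro m
    induction m with
    | zero =>
      intro p q
      have h1 : mpPow A 1 = A := by simp [mpPow]
      rw [h1, hA]
      have h2 := hpos p
      have h3 := hpos iN
      have h4 := hpos q
      by_cases h : p = q
      · simp only [if_pos h]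
        push_cast
        rw [eq_comm, max_eq_left (by nlinarith)]
        ring
      · simp only [if_neg h]
        push_cast
        rw [eq_comm, max_eq_left (by nlinarith)]
        simp
    | succ m ih =>
      intro p q
      have hstep : mpPow A (m + 2) p q =
          univ.sup' univ_nonempty (fun t => A p t + mpPow A (m + 1) t q) := by
        have h1 : mpPow A (m + 2) = mpMul A (mpPow A (m + 1)) := by
          show (mpMul A)^[m + 2 - 1] A = mpMul A ((mpMul A)^[m + 1 - 1] A)
          simp [Function.iterate_succ_apply']
        rw [h1]; rfl
      rw [hstep]
      push_cast
      have h0p := hpos p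
      have h0q := hpos q
      have h0N := hpos iN
      have hMp := haM p
      have hMq := haM q
      have hm0 : (0:ℝ) ≤ (m:ℝ) := by positivity
      apply le_antisymm
      · apply Finset.sup'_le
        intro t _
        rw [hA, ih t q]
        have hMt := haM t
        have h0t := hpos t
        have h1 : (m:ℝ) * max (a t) (a q) ≤ (m:ℝ) * a iN :=
          mul_le_mul_of_nonneg_left (max_le hMt hMq) hm0
        have h2 : ((m:ℝ) + 1) * a q ≤ ((m:ℝ) + 1) * max (a p) (a q) :=
          mul_le_mul_of_nonneg_left (le_max_right _ _) (by linarith)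
        have h3 : a p ≤ max (a p) (a q) := le_max_left _ _
        by_cases htp : p = t
        · subst htp
          rw [if_pos rfl]
          by_cases htq : p = q
          · rw [if_pos htq, if_pos htq, ← max_add_add_left]
            exact max_le (le_max_of_le_left (by linarith))
              (le_max_of_le_right (by linarith))
          · rw [if_neg htq, if_neg htq, ← max_add_add_left]
            exact max_le (le_max_of_le_left (by linarith))
              (le_max_of_le_right (by linarith))
        · rw [if_neg htp, zero_add]
          by_cases htq : t = q
          · subst htq
            rw [if_pos rfl, if_neg htp]
            exact max_le (le_max_of_le_left (by linarith))
              (le_max_of_le_right (by linarith))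
          · rw [if_neg htq]
            by_cases hpq : p = q
            · rw [if_pos hpq]
              exact max_le (le_max_of_le_right (by linarith))
                (le_max_of_le_right (by linarith))
            · rw [if_neg hpq]
              exact max_le (le_max_of_le_right (by linarith))
                (le_max_of_le_right (by linarith))
      · -- lower bound
        by_cases hpq : p = q
        · subst hpq
          rw [if_pos rfl]
          apply max_le
          · -- (m+2) * a p achieved at t = p
            refine le_trans ?_ (Finset.le_sup' _ (mem_univ p))
            rw [hA, ih p p, if_pos rfl, if_pos rfl]
            have := le_max_left (((m:ℝ) + 1) * a p) (((m:ℝ) - 1) * a iN)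
            linarith
          · -- m * a iN
            by_cases hpN : p = iN
            · refine le_trans ?_ (Finset.le_sup' _ (mem_univ p))
              rw [hA, ih p p, if_pos rfl, if_pos rfl]
              have h4 : (m:ℝ) * a iN ≤ ((m:ℝ) + 1) * a p := by
                rw [hpN]; nlinarith
              have h5 := le_max_left (((m:ℝ) + 1) * a p) (((m:ℝ) - 1) * a iN)
              linarith
            · refine le_trans ?_ (Finset.le_sup' _ (mem_univ iN))
              rw [hA, ih iN p]
              have hNp : iN ≠ p := fun h => hpN h.symm
              rw [if_neg hpN, if_neg hNp]
              rw [zero_add]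
              have h6 : (m:ℝ) * a iN ≤ (m:ℝ) * max (a iN) (a p) :=
                mul_le_mul_of_nonneg_left (le_max_left _ _) hm0
              have h7 := le_max_left ((m:ℝ) * max (a iN) (a p)) (((m:ℝ) - 1) * a iN)
              linarith
        · rw [if_neg hpq]
          apply max_le
          · rcases le_total (a q) (a p) with hc | hc
            · refine le_trans ?_ (Finset.le_sup' _ (mem_univ p))
              rw [hA, ih p q]
              rw [if_pos rfl, if_neg hpq]
              rw [max_eq_left hc]
              have := le_max_left ((m:ℝ) * a p) (((m:ℝ) - 1) * a iN)
              linarith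
            · refine le_trans ?_ (Finset.le_sup' _ (mem_univ q))
              rw [hA, ih q q]
              rw [if_neg hpq, if_pos rfl]
              rw [zero_add, max_eq_right hc]
              have := le_max_left (((m:ℝ) + 1) * a q) (((m:ℝ) - 1) * a iN)
              linarith
          · by_cases hpN : p = iN
            · refine le_trans ?_ (Finset.le_sup' _ (mem_univ p))
              rw [hA, ih p q]
              rw [if_pos rfl, if_neg hpq]
              have h8 : max (a p) (a q) = a iN := by
                rw [hpN]; exact max_eq_left hMq
              rw [h8]
              have := le_max_left ((m:ℝ) * a iN) (((m:ℝ) - 1) * a iN)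
              have hp0 : (0:ℝ) ≤ a p := h0p
              linarith
            · refine le_trans ?_ (Finset.le_sup' _ (mem_univ iN))
              rw [hA, ih iN q]
              rw [if_neg hpN, zero_add]
              by_cases hNq : iN = q
              · rw [if_pos hNq]
                subst hNq
                have := le_max_left (((m:ℝ) + 1) * a iN) (((m:ℝ) - 1) * a iN)
                nlinarith
              · rw [if_neg hNq]
                have h9 : max (a iN) (a q) = a iN := max_eq_left hMq
                rw [h9]
                have := le_max_left ((m:ℝ) * a iN) (((m:ℝ) - 1) * a iN)
                linarith
  -- instantiate
  obtain ⟨k', rfl⟩ : ∃ k', k = k' + 2 := ⟨k - 2, by omega⟩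
  have hii0 : i ≠ i0 := by
    intro h; have h' : (i : ℕ) = 0 := by rw [h]
    omega
  have hiiN : i ≠ iN := by
    intro h; rw [Fin.ext_iff] at h; simp [iN] at h; omega
  have hi0N : i0 ≠ iN := by
    intro h; rw [Fin.ext_iff] at h; simp [i0, iN] at h; omega
  have hbig' : max ((k' : ℝ) * a iN) (((k' : ℝ) + 2) * a i0) < ((k' : ℝ) + 1) * a i := by
    push_cast at hbig
    ring_nf at hbig ⊢
    convert hbig using 2
  have hb1 : (k' : ℝ) * a iN < ((k' : ℝ) + 1) * a i :=
    lt_of_le_of_lt (le_max_left _ _) hbig'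
  have hb2 : ((k' : ℝ) + 2) * a i0 < ((k' : ℝ) + 1) * a i :=
    lt_of_le_of_lt (le_max_right _ _) hbig'
  have hD00 : mpPow A (k' + 2) i0 i0 = max (((k' : ℝ) + 2) * a i0) ((k' : ℝ) * a iN) := by
    rw [key (k' + 1) i0 i0]
    rw [if_pos rfl]
    push_cast
    ring_nf
  have haiN : a i ≤ a iN := haM i
  have ha0i : a i0 ≤ a i := hmono (by rw [Fin.le_def]; simp [i0])
  have hk'0 : (0:ℝ) ≤ (k' : ℝ) := by positivity
  have hDiN : mpPow A (k' + 2) i iN = ((k' : ℝ) + 1) * a iN := by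
    rw [key (k' + 1) i iN]
    simp only [if_neg hiiN]
    push_cast
    rw [max_eq_right haiN, max_eq_left (by nlinarith [hpos iN])]
  have hDi0 : mpPow A (k' + 2) i i0 = ((k' : ℝ) + 1) * a i := by
    rw [key (k' + 1) i i0]
    simp only [if_neg hii0]
    push_cast
    rw [max_eq_left ha0i, max_eq_left (by linarith)]
  have hD0N : mpPow A (k' + 2) i0 iN = ((k' : ℝ) + 1) * a iN := by
    rw [key (k' + 1) i0 iN]
    simp only [if_neg hi0N]
    push_cast
    rw [max_eq_right (haM i0), max_eq_left (by nlinarith [hpos iN])]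
  have hmain : mpPow A (k' + 2) i0 i0 + mpPow A (k' + 2) i iN
      < mpPow A (k' + 2) i i0 + mpPow A (k' + 2) i0 iN := by
    rw [hD00, hDiN, hDi0, hD0N]
    have := max_lt hb2 hb1
    linarith
  refine ⟨fun h => absurd (h i iN i0) (by rw [not_le]; linarith [hmain]), hmain⟩
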